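/- For every integer n ≥ 1 there exists a finite family F of closed axis-parallel rectangles in ℝ² containing n designated pairwise distinct members q₁, …, q_n such that for every subset T ⊆ {1, …, n} there is a member s_T ∈ F, distinct from all q_i, with the following property: in the intersection graph of F, the set of indices i ∈ {1, …, n} such that q_i is at graph distance at most 2 from s_T is exactly T. Consequently, the set systems formed by the distance-2 closed neighborhoods in intersection graphs of axis-parallel rectangles have unbounded VC-dimension: for every n, some such system shatters a set of n vertices. -/

import Mathlib

/-- A closed axis-parallel rectangle in `ℝ²`. -/
def IsRect (R : Set (ℝ × ℝ)) : Prop :=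
  ∃ a b c d : ℝ, a ≤ b ∧ c ≤ d ∧ R = Set.Icc a b ×ˢ Set.Icc c d

/-- The intersection graph of a family of sets: two distinct members are adjacent
iff they intersect. -/
def interGraph (F : Set (Set (ℝ × ℝ))) : SimpleGraph ↥F :=
  SimpleGraph.fromRel fun u v => (u.1 ∩ v.1).Nonempty

/-- `A` is shattered by a family `Fam` of sets. -/
def Shatters {α : Type*} (Fam : Set (Set α)) (A : Set α) : Prop :=
  ∀ B ⊆ A, ∃ S ∈ Fam, S ∩ A = B

/-! ### Auxiliary: distance ≤ 2 characterization -/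

lemma edistLeTwoIff {V : Type*} (G : SimpleGraph V) (u v : V) :
    G.edist u v ≤ 2 ↔ u = v ∨ G.Adj u v ∨ ∃ w, G.Adj u w ∧ G.Adj w v := by
  constructor
  · intro h
    have hne : G.edist u v ≠ ⊤ := by
      intro ht
      rw [ht] at h
      exact (by simp at h : False)
    obtain ⟨p, hp⟩ := SimpleGraph.exists_walk_of_edist_ne_top hne
    have hlen : (p.length : ℕ∞) ≤ 2 := hp ▸ h
    have hlen2 : p.length ≤ 2 := by exact_mod_cast hlen
    cases p with
    | nil => exact Or.inl rfl
    | @cons _ b _ h1 p1 =>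
      cases p1 with
      | nil => exact Or.inr (Or.inl h1)
      | @cons _ c _ h2 p2 =>
        have hl0 : p2.length = 0 := by
          simp only [SimpleGraph.Walk.length_cons] at hlen2; omega
        have hcv : c = v := SimpleGraph.Walk.eq_of_length_eq_zero hl0
        subst hcv
        exact Or.inr (Or.inr ⟨b, h1, h2⟩)
  · rintro (rfl | h | ⟨w, h1, h2⟩)
    · simp
    · calc G.edist u v ≤ (h.toWalk.length : ℕ∞) := SimpleGraph.Walk.edist_le _
        _ ≤ 2 := by simp
    · calc G.edist u v ≤ (((SimpleGraph.Walk.cons h1 h2.toWalk)).length : ℕ∞) :=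
          SimpleGraph.Walk.edist_le _
        _ ≤ 2 := by simp

/-! ### The construction -/

noncomputable section Stmt19Aux

open Set

/-- An injective encoding of subsets of `Fin n` as naturals, bounded by the cardinality. -/
noncomputable def enc19 (n : ℕ) (T : Set (Fin n)) : ℕ :=
  ((Fintype.equivFin (Set (Fin n))) T : ℕ)

lemma enc19_lt (n : ℕ) (T : Set (Fin n)) :
    enc19 n T < Fintype.card (Set (Fin n)) := by
  exact ((Fintype.equivFin (Set (Fin n))) T).isLt

lemma enc19_inj (n : ℕ) : Function.Injective (enc19 n) := by
  intro T T' h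
  have := Fin.val_injective h
  exact (Fintype.equivFin (Set (Fin n))).injective this

/-- x-coordinate of the point rectangle `sr T`. -/
noncomputable def xc (n : ℕ) (T : Set (Fin n)) : ℝ := n + 1 + enc19 n T

/-- y-coordinate of the point rectangle `sr T`. -/
noncomputable def yc (n : ℕ) (T : Set (Fin n)) : ℝ :=
  xc n T - (n + 3 + Fintype.card (Set (Fin n)))

lemma xc_ge (n : ℕ) (T : Set (Fin n)) : (n : ℝ) + 1 ≤ xc n T := by
  have : (0:ℝ) ≤ (enc19 n T : ℝ) := Nat.cast_nonneg _
  unfold xc; linarith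

lemma xc_lt (n : ℕ) (T : Set (Fin n)) :
    xc n T < (n : ℝ) + 2 + Fintype.card (Set (Fin n)) := by
  have h := enc19_lt n T
  have : (enc19 n T : ℝ) < (Fintype.card (Set (Fin n)) : ℝ) := by exact_mod_cast h
  unfold xc; linarith

lemma yc_neg (n : ℕ) (T : Set (Fin n)) : yc n T < 0 := by
  have := xc_lt n T
  unfold yc; linarith

lemma i_lt_xc (n : ℕ) (i : Fin n) (T : Set (Fin n)) : ((i : ℕ) : ℝ) < xc n T := by
  have h1 : ((i : ℕ) : ℝ) < (n : ℝ) := by exact_mod_cast i.isLt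
  have := xc_ge n T
  linarith

lemma yc_le_iff (n : ℕ) (T T' : Set (Fin n)) : yc n T ≤ yc n T' ↔ xc n T ≤ xc n T' := by
  unfold yc; constructor <;> intro h <;> linarith

lemma xc_inj (n : ℕ) {T T' : Set (Fin n)} (h : xc n T = xc n T') : T = T' := by
  have h2 : (enc19 n T : ℝ) = (enc19 n T' : ℝ) := by unfold xc at h; linarith
  exact enc19_inj n (by exact_mod_cast h2)

/-- The point rectangle for index `i`. -/
def qr (n : ℕ) (i : Fin n) : Set (ℝ × ℝ) :=
  Set.Icc ((i : ℕ) : ℝ) ((i : ℕ) : ℝ) ×ˢ Set.Icc ((i : ℕ) : ℝ) ((i : ℕ) : ℝ)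

/-- The point rectangle for subset `T`. -/
noncomputable def sr (n : ℕ) (T : Set (Fin n)) : Set (ℝ × ℝ) :=
  Set.Icc (xc n T) (xc n T) ×ˢ Set.Icc (yc n T) (yc n T)

/-- The connector rectangle joining `qr i` and `sr T`. -/
noncomputable def hr (n : ℕ) (T : Set (Fin n)) (i : Fin n) : Set (ℝ × ℝ) :=
  Set.Icc ((i : ℕ) : ℝ) (xc n T) ×ˢ Set.Icc (yc n T) ((i : ℕ) : ℝ)

lemma qr_eq (n : ℕ) (i : Fin n) : qr n i = {(((i : ℕ) : ℝ), ((i : ℕ) : ℝ))} := by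
  rw [qr, Set.Icc_self, Set.singleton_prod_singleton]

lemma sr_eq (n : ℕ) (T : Set (Fin n)) : sr n T = {(xc n T, yc n T)} := by
  rw [sr, Set.Icc_self, Set.Icc_self, Set.singleton_prod_singleton]

lemma mem_hr (n : ℕ) (T : Set (Fin n)) (i : Fin n) (p : ℝ × ℝ) :
    p ∈ hr n T i ↔ (((i : ℕ) : ℝ) ≤ p.1 ∧ p.1 ≤ xc n T) ∧
      (yc n T ≤ p.2 ∧ p.2 ≤ ((i : ℕ) : ℝ)) := by
  simp only [hr, Set.mem_prod, Set.mem_Icc]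

/-- The family of rectangles. -/
noncomputable def Fam19 (n : ℕ) : Set (Set (ℝ × ℝ)) :=
  Set.range (qr n) ∪ Set.range (sr n) ∪ {r | ∃ T i, i ∈ T ∧ r = hr n T i}

lemma Fam19_finite (n : ℕ) : (Fam19 n).Finite := by
  apply Set.Finite.union
  · exact (Set.finite_range _).union (Set.finite_range _)
  · apply Set.Finite.subset (Set.finite_range
      (fun p : Set (Fin n) × Fin n => hr n p.1 p.2))
    rintro r ⟨T, i, _, rfl⟩
    exact ⟨(T, i), rfl⟩

lemma Fam19_isRect (n : ℕ) : ∀ R ∈ Fam19 n, IsRect R := by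
  rintro R ((⟨i, rfl⟩ | ⟨T, rfl⟩) | ⟨T, i, _, rfl⟩)
  · exact ⟨_, _, _, _, le_refl _, le_refl _, rfl⟩
  · exact ⟨_, _, _, _, le_refl _, le_refl _, rfl⟩
  · exact ⟨_, _, _, _, (i_lt_xc n i T).le,
      (yc_neg n T).le.trans (Nat.cast_nonneg _), rfl⟩

/-! basic distinctness and intersection facts -/

lemma qr_inj (n : ℕ) : Function.Injective (qr n) := by
  intro i j h
  rw [qr_eq, qr_eq] at h
  have h2 : (((i : ℕ) : ℝ), ((i : ℕ) : ℝ)) = (((j : ℕ) : ℝ), ((j : ℕ) : ℝ)) :=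
    Set.singleton_eq_singleton_iff.mp h
  have : ((i : ℕ) : ℝ) = ((j : ℕ) : ℝ) := congrArg Prod.fst h2
  exact Fin.val_injective (by exact_mod_cast this)

lemma sr_ne_qr (n : ℕ) (T : Set (Fin n)) (i : Fin n) : sr n T ≠ qr n i := by
  rw [sr_eq, qr_eq]
  intro h
  have h2 : (xc n T, yc n T) = ((((i : ℕ) : ℝ)), ((i : ℕ) : ℝ)) :=
    Set.singleton_eq_singleton_iff.mp h
  have : yc n T = ((i : ℕ) : ℝ) := congrArg Prod.snd h2
  have := yc_neg n T
  have h0 : (0:ℝ) ≤ ((i : ℕ) : ℝ) := Nat.cast_nonneg _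
  linarith

lemma qr_ne_hr (n : ℕ) (i : Fin n) (T : Set (Fin n)) (j : Fin n) :
    qr n i ≠ hr n T j := by
  intro h
  have hm : (((j : ℕ) : ℝ), yc n T) ∈ hr n T j := by
    rw [mem_hr]
    exact ⟨⟨le_refl _, (i_lt_xc n j T).le⟩, le_refl _,
      (yc_neg n T).le.trans (Nat.cast_nonneg _)⟩
  rw [← h, qr_eq, Set.mem_singleton_iff] at hm
  have : yc n T = ((i : ℕ) : ℝ) := congrArg Prod.snd hm
  have := yc_neg n T
  have h0 : (0:ℝ) ≤ ((i : ℕ) : ℝ) := Nat.cast_nonneg _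
  linarith

lemma sr_ne_hr (n : ℕ) (T T' : Set (Fin n)) (j : Fin n) :
    sr n T ≠ hr n T' j := by
  intro h
  have hm : (((j : ℕ) : ℝ), ((j : ℕ) : ℝ)) ∈ hr n T' j := by
    rw [mem_hr]
    exact ⟨⟨le_refl _, (i_lt_xc n j T').le⟩,
      (yc_neg n T').le.trans (Nat.cast_nonneg _), le_refl _⟩
  rw [← h, sr_eq, Set.mem_singleton_iff] at hm
  have : ((j : ℕ) : ℝ) = yc n T := congrArg Prod.snd hm
  have := yc_neg n T
  have h0 : (0:ℝ) ≤ ((j : ℕ) : ℝ) := Nat.cast_nonneg _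
  linarith

lemma qr_inter_qr (n : ℕ) {i j : Fin n} (hij : i ≠ j) : ¬(qr n i ∩ qr n j).Nonempty := by
  rintro ⟨p, hp1, hp2⟩
  rw [qr_eq, Set.mem_singleton_iff] at hp1 hp2
  have h3 := hp1.symm.trans hp2
  have h4 : (((i : ℕ) : ℝ)) = ((j : ℕ) : ℝ) := congrArg Prod.fst h3
  exact hij (Fin.val_injective (by exact_mod_cast h4))

lemma qr_inter_sr (n : ℕ) (i : Fin n) (T : Set (Fin n)) : ¬(qr n i ∩ sr n T).Nonempty := by
  rintro ⟨p, hp1, hp2⟩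
  rw [qr_eq, Set.mem_singleton_iff] at hp1
  rw [sr_eq, Set.mem_singleton_iff] at hp2
  have h1 : p.2 = ((i : ℕ) : ℝ) := congrArg Prod.snd hp1
  have h2 : p.2 = yc n T := congrArg Prod.snd hp2
  have := yc_neg n T
  have h0 : (0:ℝ) ≤ ((i : ℕ) : ℝ) := Nat.cast_nonneg _
  linarith

lemma qr_inter_hr (n : ℕ) {i : Fin n} {T : Set (Fin n)} {j : Fin n}
    (h : (qr n i ∩ hr n T j).Nonempty) : i = j := by
  obtain ⟨p, hp1, hp2⟩ := h
  rw [qr_eq, Set.mem_singleton_iff] at hp1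
  subst hp1
  rw [mem_hr] at hp2
  have h1 : ((j : ℕ) : ℝ) ≤ ((i : ℕ) : ℝ) := hp2.1.1
  have h2 : ((i : ℕ) : ℝ) ≤ ((j : ℕ) : ℝ) := hp2.2.2
  exact Fin.val_injective (by exact_mod_cast le_antisymm h2 h1)

lemma sr_inter_hr (n : ℕ) {T T' : Set (Fin n)} {j : Fin n}
    (h : (sr n T ∩ hr n T' j).Nonempty) : T = T' := by
  obtain ⟨p, hp1, hp2⟩ := h
  rw [sr_eq, Set.mem_singleton_iff] at hp1
  subst hp1
  rw [mem_hr] at hp2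
  have h1 : xc n T ≤ xc n T' := hp2.1.2
  have h2 : yc n T' ≤ yc n T := hp2.2.1
  have h3 : xc n T' ≤ xc n T := (yc_le_iff n T' T).mp h2
  exact xc_inj n (le_antisymm h1 h3)

lemma qr_inter_hr_self (n : ℕ) (i : Fin n) (T : Set (Fin n)) :
    (qr n i ∩ hr n T i).Nonempty := by
  refine ⟨(((i : ℕ) : ℝ), ((i : ℕ) : ℝ)), ?_, ?_⟩
  · rw [qr_eq]; exact rfl
  · rw [mem_hr]
    exact ⟨⟨le_refl _, (i_lt_xc n i T).le⟩,
      (yc_neg n T).le.trans (Nat.cast_nonneg _), le_refl _⟩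

lemma sr_inter_hr_self (n : ℕ) (T : Set (Fin n)) (i : Fin n) :
    (sr n T ∩ hr n T i).Nonempty := by
  refine ⟨(xc n T, yc n T), ?_, ?_⟩
  · rw [sr_eq]; exact rfl
  · rw [mem_hr]
    exact ⟨⟨(i_lt_xc n i T).le, le_refl _⟩, le_refl _,
      (yc_neg n T).le.trans (Nat.cast_nonneg _)⟩

end Stmt19Aux

theorem stmt19 (n : ℕ) (hn : 1 ≤ n) :
    ∃ F : Set (Set (ℝ × ℝ)), F.Finite ∧ (∀ R ∈ F, IsRect R) ∧
      ∃ (q : Fin n → Set (ℝ × ℝ)) (hq : ∀ i, q i ∈ F), Function.Injective q ∧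
        (∀ T : Set (Fin n), ∃ s, ∃ hs : s ∈ F, (∀ i, s ≠ q i) ∧
          ∀ i : Fin n, ((interGraph F).edist ⟨q i, hq i⟩ ⟨s, hs⟩ ≤ 2 ↔ i ∈ T)) ∧
        Shatters {N : Set ↥F | ∃ v : ↥F, N = {u : ↥F | (interGraph F).edist u v ≤ 2}}
          (Set.range fun i => (⟨q i, hq i⟩ : ↥F)) := by
  classical
  have hq' : ∀ i, qr n i ∈ Fam19 n := fun i => Or.inl (Or.inl ⟨i, rfl⟩)
  have main : ∀ T : Set (Fin n), ∃ s, ∃ hs : s ∈ Fam19 n, (∀ i, s ≠ qr n i) ∧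
      ∀ i : Fin n, ((interGraph (Fam19 n)).edist ⟨qr n i, hq' i⟩ ⟨s, hs⟩ ≤ 2 ↔ i ∈ T) := by
    intro T
    refine ⟨sr n T, Or.inl (Or.inr ⟨T, rfl⟩), fun i => sr_ne_qr n T i, fun i => ?_⟩
    rw [edistLeTwoIff]
    constructor
    · rintro (heq | hadj | ⟨w, h1, h2⟩)
      · exact absurd (congrArg Subtype.val heq).symm (sr_ne_qr n T i)
      · rw [interGraph, SimpleGraph.fromRel_adj] at hadj
        rcases hadj.2 with h | h
        · exact absurd h (qr_inter_sr n i T)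
        · exact absurd (Set.inter_comm _ _ ▸ h) (qr_inter_sr n i T)
      · obtain ⟨w, hw⟩ := w
        rw [interGraph, SimpleGraph.fromRel_adj] at h1 h2
        have h1' : (qr n i ∩ w).Nonempty := by
          rcases h1.2 with h | h
          · exact h
          · exact Set.inter_comm _ _ ▸ h
        have h2' : (w ∩ sr n T).Nonempty := by
          rcases h2.2 with h | h
          · exact h
          · exact Set.inter_comm _ _ ▸ h
        rcases hw with ((⟨j, rfl⟩ | ⟨T', rfl⟩) | ⟨T', j, hjT', rfl⟩)
        · by_cases hij : i = j
          · subst hij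
            exact absurd rfl (h1.1 ∘ Subtype.ext)
          · exact absurd h1' (qr_inter_qr n hij)
        · exact absurd h1' (qr_inter_sr n i T')
        · have hij : i = j := qr_inter_hr n h1'
          have hTT : T = T' := sr_inter_hr n (Set.inter_comm _ _ ▸ h2')
          rw [hij, hTT]
          exact hjT'
    · intro hiT
      refine Or.inr (Or.inr ⟨⟨hr n T i, Or.inr ⟨T, i, hiT, rfl⟩⟩, ?_, ?_⟩)
      · rw [interGraph, SimpleGraph.fromRel_adj]
        exact ⟨fun h => qr_ne_hr n i T i (congrArg Subtype.val h),
          Or.inl (qr_inter_hr_self n i T)⟩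
      · rw [interGraph, SimpleGraph.fromRel_adj]
        exact ⟨fun h => sr_ne_hr n T T i (congrArg Subtype.val h).symm,
          Or.inr (sr_inter_hr_self n T i)⟩
  refine ⟨Fam19 n, Fam19_finite n, Fam19_isRect n, qr n, hq', qr_inj n, main, ?_⟩
  intro B hB
  obtain ⟨s, hs, -, hiff⟩ := main {i | (⟨qr n i, hq' i⟩ : ↑(Fam19 n)) ∈ B}
  refine ⟨{u : ↑(Fam19 n) | (interGraph (Fam19 n)).edist u ⟨s, hs⟩ ≤ 2},
    ⟨⟨s, hs⟩, rfl⟩, ?_⟩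
  ext u
  simp only [Set.mem_inter_iff, Set.mem_setOf_eq]
  constructor
  · rintro ⟨hu, hur⟩
    obtain ⟨i, hi⟩ := hur
    rw [← hi] at hu ⊢
    exact (hiff i).mp hu
  · intro hb
    obtain ⟨i, hi⟩ := hB hb
    refine ⟨?_, ⟨i, hi⟩⟩
    rw [← hi]
    have hi' : (⟨qr n i, hq' i⟩ : ↑(Fam19 n)) = u := hi
    refine (hiff i).mpr ?_
    show (⟨qr n i, hq' i⟩ : ↑(Fam19 n)) ∈ B
    rw [hi']
    exact hb
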